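/- Let n ≥ 1, let K ⊂ ℝⁿ be a convex body and let ν ∈ (0, |K|]. Then there exists r = r(ν, K) > 0 such that for every convex body P ⊆ K with |P| ≥ ν and every integer k > n^{3/2}/(2r), there exists a point p ∈ P such that the set P_p := (1 − n^{3/2}/(2rk))^{1/n}·(P − p) + p satisfies both P_p ⊆ P and P_p ⊆ (P ∩ ℤⁿ/k) + [−1/2, 1/2]ⁿ/k. -/

import Mathlib

open MeasureTheory Set Pointwise

/-- The rescaled lattice `ℤⁿ/k` inside `ℝⁿ`. -/
def lpts (n k : ℕ) : Set (EuclideanSpace ℝ (Fin n)) :=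
  {x | ∀ i, ∃ m : ℤ, (k : ℝ) * x i = (m : ℝ)}

/-- The cube `[−1/(2k), 1/(2k)]ⁿ` inside `ℝⁿ`. -/
def smallCube (n k : ℕ) : Set (EuclideanSpace ℝ (Fin n)) :=
  {x | ∀ i, |x i| ≤ 1 / (2 * (k : ℝ))}

open Matrix

noncomputable section

lemma coord_le_norm {n : ℕ} (x : EuclideanSpace ℝ (Fin n)) (i : Fin n) : |x i| ≤ ‖x‖ := by
  rw [EuclideanSpace.norm_eq]
  have h : |x i| = Real.sqrt (‖x i‖^2) := by
    rw [Real.sqrt_sq_eq_abs, Real.norm_eq_abs, abs_abs]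
  rw [h]
  exact Real.sqrt_le_sqrt (Finset.single_le_sum (f := fun j => ‖x j‖^2) (fun j _ => sq_nonneg _) (Finset.mem_univ i))

lemma phi_apply {n : ℕ} (x : EuclideanSpace ℝ (Fin n)) (i : Fin n) :
    (WithLp.linearEquiv 2 ℝ (Fin n → ℝ)) x i = x i := rfl

lemma phi_symm_apply {n : ℕ} (x : Fin n → ℝ) (i : Fin n) :
    (WithLp.linearEquiv 2 ℝ (Fin n → ℝ)).symm x i = x i := rfl

set_option maxHeartbeats 2000000 in
private lemma inball (n : ℕ) (hn : 1 ≤ n) (R ν : ℝ) (hR : 0 < R) (hν : 0 < ν) :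
    ∃ r : ℝ, 0 < r ∧ ∀ P : Set (EuclideanSpace ℝ (Fin n)), P ⊆ Metric.closedBall 0 R →
      P.Nonempty → IsCompact P → Convex ℝ P → ν ≤ (volume P).toReal →
      ∃ p, Metric.closedBall p r ⊆ P := by
  classical
  set E := EuclideanSpace ℝ (Fin n)
  set C : ℝ := (n.factorial : ℝ) * (max (2*R) 1)^n with hC
  have hCpos : 0 < C := by positivity
  set r : ℝ := (ν / 2^n) / (2 * (n:ℝ)^2 * C) with hr
  have hn0 : (0:ℝ) < n := by exact_mod_cast hn
  have hrpos : 0 < r := by positivity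
  refine ⟨r, hrpos, ?_⟩
  intro P hPR hPne hPcp hPcv hPν
  set φ : E ≃ₗ[ℝ] (Fin n → ℝ) := WithLp.linearEquiv 2 ℝ (Fin n → ℝ) with hφ
  set Mat : (Fin (n+1) → E) → Matrix (Fin n) (Fin n) ℝ :=
    fun v => Matrix.of fun i j => φ (v j.succ - v 0) i with hMat
  set g : (Fin (n+1) → E) → ℝ := fun v => |(Mat v).det| with hg
  set T : Set (Fin (n+1) → E) := Set.pi univ (fun _ => P) with hT
  have hTcp : IsCompact T := isCompact_univ_pi (fun _ => hPcp)
  obtain ⟨p0, hp0⟩ := hPne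
  have hTne : T.Nonempty := ⟨fun _ => p0, fun i _ => hp0⟩
  have hgc : Continuous g := by
    refine (Continuous.matrix_det (continuous_matrix fun i j => ?_)).abs
    have h1 : Continuous fun v : Fin (n+1) → E => v j.succ - v 0 :=
      (continuous_apply (Fin.succ j)).sub (continuous_apply 0)
    have h2 : Continuous fun x : E => φ x i := by
      rw [hφ]; exact (EuclideanSpace.proj i).continuous
    exact h2.comp h1
  obtain ⟨v, hvT, hvmax⟩ := hTcp.exists_isMaxOn hTne hgc.continuousOn
  have hvP : ∀ i, v i ∈ P := fun i => hvT i (mem_univ i)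
  set A : Matrix (Fin n) (Fin n) ℝ := Mat v with hA
  set d : ℝ := |A.det| with hd
  -- interior nonempty
  have hvolP : volume P ≠ 0 := by
    intro h0
    rw [h0] at hPν
    simp at hPν; linarith
  have hint : (interior P).Nonempty := by
    rw [hPcv.interior_nonempty_iff_affineSpan_eq_top]
    by_contra hne
    exact hvolP (measure_mono_null (subset_affineSpan ℝ P)
      (Measure.addHaar_affineSubspace _ _ hne))
  -- d positive
  have hdpos : 0 < d := by
    obtain ⟨x₀, hx₀⟩ := hint
    obtain ⟨s, hspos, hsball⟩ := Metric.isOpen_iff.1 isOpen_interior x₀ hx₀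
    set w : Fin (n+1) → E := Fin.cases x₀ (fun j => x₀ + (s/2) • EuclideanSpace.single j 1) with hw
    have hwT : w ∈ T := by
      intro i _
      refine Fin.cases ?_ (fun j => ?_) i
      · simpa only [hw, Fin.cases_zero] using interior_subset hx₀
      · simp only [hw, Fin.cases_succ]
        refine interior_subset (hsball ?_)
        rw [Metric.mem_ball, dist_eq_norm, add_sub_cancel_left, norm_smul,
          EuclideanSpace.norm_single]
        simp [abs_of_pos hspos]; linarith
    have hMw : (Mat w).det = (s/2)^n := by
      have heq : Mat w = Matrix.diagonal (fun _ : Fin n => s/2) := by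
        ext i j
        simp only [hMat, Matrix.of_apply, hw, Fin.cases_succ, Fin.cases_zero,
          add_sub_cancel_left, hφ, Matrix.diagonal_apply, _root_.map_smul, Pi.smul_apply,
          smul_eq_mul]
        rw [show (WithLp.linearEquiv 2 ℝ (Fin n → ℝ)) (EuclideanSpace.single j 1) i
            = (EuclideanSpace.single j 1 : EuclideanSpace ℝ (Fin n)) i from rfl,
          EuclideanSpace.single_apply]
        split_ifs <;> simp
      rw [heq, Matrix.det_diagonal]; simp; rw [div_pow]
    have hle : g w ≤ g v := hvmax hwT
    simp only [hg, hMw] at hle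
    calc (0:ℝ) < (s/2)^n := by positivity
    _ ≤ |(s/2)^n| := le_abs_self _
    _ ≤ d := hle
  have hdet0 : A.det ≠ 0 := fun h => by simp [hd, h] at hdpos
  have hdetu : IsUnit A.det := isUnit_iff_ne_zero.2 hdet0
  -- coordinates of any x ∈ P
  have hy : ∀ x ∈ P, ∀ j, |(A⁻¹ *ᵥ (φ (x - v 0))) j| ≤ 1 := by
    intro x hx j
    set y : Fin n → ℝ := A⁻¹ *ᵥ (φ (x - v 0)) with hy'
    have hAy : A *ᵥ y = φ (x - v 0) := by
      rw [hy', Matrix.mulVec_mulVec, Matrix.mul_nonsing_inv _ hdetu, Matrix.one_mulVec]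
    have hcr : Matrix.cramer A (φ (x - v 0)) = A.det • y := by
      have h1 := Matrix.mulVec_cramer A (φ (x - v 0))
      have hinj : Function.Injective (fun u : Fin n → ℝ => A *ᵥ u) := by
        intro a b hab
        simp only at hab
        have h3 : A⁻¹ *ᵥ (A *ᵥ a) = A⁻¹ *ᵥ (A *ᵥ b) := by rw [hab]
        rwa [Matrix.mulVec_mulVec, Matrix.mulVec_mulVec, Matrix.nonsing_inv_mul _ hdetu,
          Matrix.one_mulVec, Matrix.one_mulVec] at h3
      apply hinj
      simp only
      rw [h1, Matrix.mulVec_smul, hAy]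
    have hwT : Function.update v j.succ x ∈ T := by
      intro i _
      rcases eq_or_ne i j.succ with rfl | hne
      · rw [Function.update_self]; exact hx
      · rw [Function.update_of_ne hne]; exact hvP i
    have hMatw : Mat (Function.update v j.succ x) = A.updateCol j (φ (x - v 0)) := by
      ext i j'
      simp only [hMat, Matrix.of_apply, Matrix.updateCol_apply, hA]
      rw [show (Function.update v j.succ x) 0 = v 0 from
        Function.update_of_ne (Fin.succ_ne_zero j).symm _ _]
      rcases eq_or_ne j' j with rfl | hne
      · rw [if_pos rfl, Function.update_self]
      · rw [if_neg hne, Function.update_of_ne (fun h => hne (Fin.succ_injective _ h))]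
    have hdet : (Mat (Function.update v j.succ x)).det = A.det * y j := by
      rw [hMatw, ← Matrix.cramer_apply, hcr]
      simp [mul_comm]
    have hle : g (Function.update v j.succ x) ≤ g v := hvmax hwT
    simp only [hg, hdet, ← hA, ← hd, abs_mul] at hle
    nlinarith [abs_nonneg (y j), hdpos]
  -- containment and volume bound
  set Alin : E →ₗ[ℝ] E :=
    ((φ.symm : (Fin n → ℝ) →ₗ[ℝ] E) ∘ₗ (Matrix.toLin' A) ∘ₗ (φ : E →ₗ[ℝ] (Fin n → ℝ))) with hAlin
  set cube1 : Set E := {z : E | ∀ i, |φ z i| ≤ 1} with hcube1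
  have hsub : P ⊆ (v 0) +ᵥ (Alin '' cube1) := by
    intro x hx
    rw [Set.mem_vadd_set]
    refine ⟨Alin (φ.symm (A⁻¹ *ᵥ (φ (x - v 0)))), ⟨φ.symm (A⁻¹ *ᵥ (φ (x - v 0))), ?_, rfl⟩, ?_⟩
    · intro i
      rw [LinearEquiv.apply_symm_apply]
      exact hy x hx i
    · have h2 : Alin (φ.symm (A⁻¹ *ᵥ (φ (x - v 0)))) = x - v 0 := by
        simp only [hAlin, LinearMap.coe_comp, Function.comp_apply, LinearEquiv.coe_coe]
        rw [LinearEquiv.apply_symm_apply, Matrix.toLin'_apply, Matrix.mulVec_mulVec,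
          Matrix.mul_nonsing_inv _ hdetu, Matrix.one_mulVec]
        exact φ.symm_apply_apply _
      rw [h2, vadd_eq_add, add_sub_cancel]
  have hcubevol : volume cube1 = 2^n := by
    have hc2 : cube1 = ((MeasurableEquiv.toLp 2 (Fin n → ℝ)).symm) ⁻¹'
        (Set.pi univ fun _ : Fin n => Icc (-1:ℝ) 1) := by
      ext z
      simp only [hcube1, mem_setOf_eq, mem_preimage, mem_pi, mem_univ, forall_true_left,
        mem_Icc, true_implies]
      constructor
      · intro h i
        have := h i
        rw [abs_le] at this
        exact this
      · intro h i
        rw [show (φ z) i = ((MeasurableEquiv.toLp 2 (Fin n → ℝ)).symm) z i from rfl, abs_le]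
        exact h i
    rw [hc2, (EuclideanSpace.volume_preserving_symm_measurableEquiv_toLp (Fin n)).measure_preimage
      (MeasurableSet.univ_pi fun _ => measurableSet_Icc).nullMeasurableSet, volume_pi_pi]
    simp [Real.volume_Icc]
    norm_num
  have hdetAlin : LinearMap.det Alin = A.det := by
    have h := LinearMap.det_conj (Matrix.toLin' A) φ.symm
    simp only [LinearEquiv.symm_symm] at h
    rw [hAlin, hφ] at *
    rw [h, LinearMap.det_toLin']
  have hvub : volume P ≤ ENNReal.ofReal d * 2^n := by
    calc volume P ≤ volume ((v 0) +ᵥ (Alin '' cube1)) := measure_mono hsub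
    _ = volume (Alin '' cube1) := measure_vadd _ _ _
    _ = ENNReal.ofReal |LinearMap.det Alin| * volume cube1 :=
        Measure.addHaar_image_linearMap _ _ _
    _ = ENNReal.ofReal d * 2^n := by rw [hdetAlin, hcubevol, ← hd]
  have hdlb : ν / 2^n ≤ d := by
    have h2 : (ENNReal.ofReal d * 2^n).toReal = d * 2^n := by
      rw [ENNReal.toReal_mul, ENNReal.toReal_ofReal hdpos.le]
      norm_num
    have h1 : (volume P).toReal ≤ d * 2^n := by
      rw [← h2]
      exact ENNReal.toReal_mono (ENNReal.mul_ne_top ENNReal.ofReal_ne_top (ENNReal.pow_ne_top ENNReal.ofNat_ne_top)) hvub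
    rw [div_le_iff₀ (by positivity)]
    linarith
  -- entry bounds
  have hent : ∀ i j, |A i j| ≤ max (2*R) 1 := by
    intro i j
    have h0 : A i j = φ (v j.succ - v 0) i := rfl
    rw [h0]
    have h1 : |φ (v j.succ - v 0) i| ≤ ‖v j.succ - v 0‖ :=
      coord_le_norm (v j.succ - v 0) i
    have h2 : ‖v j.succ - v 0‖ ≤ ‖v j.succ‖ + ‖v 0‖ := norm_sub_le _ _
    have h3 : ‖v j.succ‖ ≤ R := mem_closedBall_zero_iff.1 (hPR (hvP j.succ))
    have h4 : ‖v 0‖ ≤ R := mem_closedBall_zero_iff.1 (hPR (hvP 0))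
    have : |φ (v j.succ - v 0) i| ≤ 2*R := by linarith
    exact le_trans this (le_max_left _ _)
  have hadj : ∀ i j, |A.adjugate i j| ≤ C := by
    intro i j
    rw [Matrix.adjugate_apply]
    have hb : ∀ i' j', |(A.updateRow j (Pi.single i 1)) i' j'| ≤ max (2*R) 1 := by
      intro i' j'
      rcases eq_or_ne i' j with rfl | hne
      · rw [Matrix.updateRow_self]
        rcases eq_or_ne j' i with rfl | h2
        · simp
        · simp [Pi.single_apply, h2]
      · rw [Matrix.updateRow_ne hne]
        exact hent _ _
    have hdle := Matrix.det_le (A := A.updateRow j (Pi.single i 1)) (abv := AbsoluteValue.abs) (x := max (2*R) 1) hb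
    simpa [hC, Fintype.card_fin, nsmul_eq_mul] using hdle
  have hinv : ∀ i j, |A⁻¹ i j| ≤ C / d := by
    intro i j
    rw [Matrix.inv_def, Matrix.smul_apply, Ring.inverse_eq_inv', smul_eq_mul, abs_mul, abs_inv,
      ← hd]
    rw [div_eq_mul_inv, mul_comm (d⁻¹)]
    exact mul_le_mul_of_nonneg_right (hadj i j) (by positivity)
  -- the center
  set q : Fin n → ℝ := fun _ => 1/(2*(n:ℝ)) with hq
  refine ⟨v 0 + φ.symm (A *ᵥ q), ?_⟩
  intro u' hu'mem
  set u : E := u' - (v 0 + φ.symm (A *ᵥ q)) with hu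
  have hnu : ‖u‖ ≤ r := by
    rw [hu]
    rw [Metric.mem_closedBall, dist_eq_norm] at hu'mem
    exact hu'mem
  have hrle : r ≤ d / (2*(n:ℝ)^2*C) := by
    rw [hr]
    gcongr
  have hAiu : ∀ j, |(A⁻¹ *ᵥ (φ u)) j| ≤ 1/(2*(n:ℝ)) := by
    intro j
    have h0 : (A⁻¹ *ᵥ (φ u)) j = ∑ i, A⁻¹ j i * φ u i := by
      simp [Matrix.mulVec, dotProduct]
    rw [h0]
    calc |∑ i, A⁻¹ j i * φ u i| ≤ ∑ i, |A⁻¹ j i * φ u i| := Finset.abs_sum_le_sum_abs _ _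
    _ ≤ ∑ _i : Fin n, (C/d) * r := by
        apply Finset.sum_le_sum
        intro i _
        rw [abs_mul]
        have h2 : |φ u i| ≤ r := le_trans (coord_le_norm u i) hnu
        exact mul_le_mul (hinv j i) h2 (abs_nonneg _) (div_nonneg hCpos.le hdpos.le)
    _ = n * ((C/d) * r) := by
        rw [Finset.sum_const, Finset.card_univ, Fintype.card_fin, nsmul_eq_mul]
    _ ≤ 1/(2*(n:ℝ)) := by
        have h3 : (n:ℝ) * ((C/d) * r) ≤ (n:ℝ) * ((C/d) * (d / (2*(n:ℝ)^2*C))) := by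
          apply mul_le_mul_of_nonneg_left _ hn0.le
          exact mul_le_mul_of_nonneg_left hrle (div_nonneg hCpos.le hdpos.le)
        have h4 : (n:ℝ) * ((C/d) * (d / (2*(n:ℝ)^2*C))) = 1/(2*(n:ℝ)) := by
          field_simp
        linarith
  set t : Fin n → ℝ := fun j => q j + (A⁻¹ *ᵥ (φ u)) j with ht
  have ht0 : ∀ j, 0 ≤ t j := by
    intro j
    have := (abs_le.1 (hAiu j)).1
    simp only [ht, hq]
    linarith
  have ht1 : ∀ j, t j ≤ 1/(n:ℝ) := by
    intro j
    have := (abs_le.1 (hAiu j)).2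
    simp only [ht, hq]
    rw [show (1:ℝ)/(n:ℝ) = 1/(2*(n:ℝ)) + 1/(2*(n:ℝ)) by field_simp; ring]
    linarith
  have hsumt : ∑ j, t j ≤ 1 := by
    calc ∑ j, t j ≤ ∑ _j : Fin n, 1/(n:ℝ) := Finset.sum_le_sum (fun j _ => ht1 j)
    _ = n * (1/(n:ℝ)) := by rw [Finset.sum_const, Finset.card_univ, Fintype.card_fin, nsmul_eq_mul]
    _ = 1 := by field_simp
  have hAt : A *ᵥ t = A *ᵥ q + φ u := by
    have h1 : t = q + A⁻¹ *ᵥ (φ u) := rfl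
    rw [h1, Matrix.mulVec_add, Matrix.mulVec_mulVec, Matrix.mul_nonsing_inv _ hdetu,
      Matrix.one_mulVec]
  have hu'eq : u' = v 0 + φ.symm (A *ᵥ t) := by
    rw [hAt, map_add, φ.symm_apply_apply]
    rw [hu]
    abel
  have hphisum : φ.symm (A *ᵥ t) = ∑ j, t j • (v j.succ - v 0) := by
    apply φ.injective
    rw [LinearEquiv.apply_symm_apply, map_sum]
    ext i
    rw [Finset.sum_apply]
    simp only [_root_.map_smul, Pi.smul_apply, smul_eq_mul]
    rw [show (A *ᵥ t) i = ∑ j, A i j * t j by simp [Matrix.mulVec, dotProduct]]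
    exact Finset.sum_congr rfl (fun j _ => mul_comm _ _)
  set c : Fin (n+1) → ℝ := Fin.cases (1 - ∑ j, t j) t with hc'
  have hcomb : u' = ∑ i : Fin (n+1), c i • v i := by
    rw [hu'eq, hphisum, Fin.sum_univ_succ]
    simp only [hc', Fin.cases_zero, Fin.cases_succ]
    rw [sub_smul, one_smul, Finset.sum_smul]
    simp only [smul_sub]
    rw [Finset.sum_sub_distrib]
    abel
  rw [hcomb]
  apply hPcv.sum_mem
  · intro i _
    refine Fin.cases ?_ (fun j => ?_) i
    · simp only [hc', Fin.cases_zero]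
      linarith
    · simp only [hc', Fin.cases_succ]
      exact ht0 j
  · rw [Fin.sum_univ_succ]
    simp only [hc', Fin.cases_zero, Fin.cases_succ]
    ring
  · intro i _
    exact hvP i

set_option maxHeartbeats 2000000 in
theorem stmt5 (n : ℕ) (hn : 1 ≤ n) (K : Set (EuclideanSpace ℝ (Fin n)))
    (hKne : K.Nonempty) (hKcp : IsCompact K) (hKcv : Convex ℝ K)
    (ν : ℝ) (hν : 0 < ν) (hνK : ν ≤ (volume K).toReal) :
    ∃ r : ℝ, 0 < r ∧ ∀ P : Set (EuclideanSpace ℝ (Fin n)),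
      P ⊆ K → P.Nonempty → IsCompact P → Convex ℝ P → ν ≤ (volume P).toReal →
      ∀ k : ℕ, (n : ℝ) ^ ((3 : ℝ) / 2) / (2 * r) < (k : ℝ) →
      ∃ p ∈ P,
        (fun x => ((1 - (n : ℝ) ^ ((3 : ℝ) / 2) / (2 * r * (k : ℝ))) ^ ((1 : ℝ) / n))
              • (x - p) + p) '' P ⊆ P ∧
        (fun x => ((1 - (n : ℝ) ^ ((3 : ℝ) / 2) / (2 * r * (k : ℝ))) ^ ((1 : ℝ) / n))
              • (x - p) + p) '' P ⊆ (P ∩ lpts n k) + smallCube n k := by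
  classical
  have hn0 : (0:ℝ) < n := by exact_mod_cast hn
  obtain ⟨R0, hR0⟩ := hKcp.isBounded.subset_closedBall 0
  set R : ℝ := max R0 1 with hR
  have hRpos : (0:ℝ) < R := lt_of_lt_of_le one_pos (le_max_right R0 1)
  have hKR : K ⊆ Metric.closedBall 0 R :=
    hR0.trans (Metric.closedBall_subset_closedBall (le_max_left _ _))
  obtain ⟨r, hrpos, hball⟩ := inball n hn R ν hRpos hν
  refine ⟨r, hrpos, ?_⟩
  intro P hPK hPne hPcp hPcv hPν k hk
  obtain ⟨p, hpball⟩ := hball P (hPK.trans hKR) hPne hPcp hPcv hPν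
  have hpP : p ∈ P := hpball (Metric.mem_closedBall_self hrpos.le)
  have hnpow : (0:ℝ) < (n:ℝ)^((3:ℝ)/2) := Real.rpow_pos_of_pos hn0 _
  have hkpos : (0:ℝ) < k := lt_trans (by positivity) hk
  set ε : ℝ := (n:ℝ)^((3:ℝ)/2) / (2 * r * (k:ℝ)) with hεdef
  have hε0 : 0 < ε := by positivity
  have hε1 : ε < 1 := by
    rw [hεdef, div_lt_one (by positivity)]
    have := (div_lt_iff₀ (by positivity : (0:ℝ) < 2*r)).1 hk
    nlinarith
  set δ : ℝ := Real.sqrt n / (2 * r * (k:ℝ)) with hδdef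
  have hsqpos : 0 < Real.sqrt n := Real.sqrt_pos.2 hn0
  have hδpos : 0 < δ := by positivity
  have hεδ : ε = n * δ := by
    rw [hεdef, hδdef]
    rw [show (n:ℝ)^((3:ℝ)/2) = n * Real.sqrt n by
      rw [Real.sqrt_eq_rpow, show ((3:ℝ)/2) = 1 + 1/2 by norm_num, Real.rpow_add hn0,
        Real.rpow_one]]
    ring
  have hn1 : (1:ℝ) ≤ n := by exact_mod_cast hn
  have hδε : δ ≤ ε := by
    rw [hεδ]
    nlinarith
  have hδ1 : δ < 1 := lt_of_le_of_lt hδε hε1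
  set l : ℝ := (1 - ε) ^ ((1:ℝ)/(n:ℝ)) with hldef
  have hl0 : 0 ≤ l := Real.rpow_nonneg (by linarith) _
  have hlle : l ≤ 1 - δ := by
    have hbern : (1 - ε) ≤ (1 - δ)^n := by
      have h := one_add_mul_le_pow (a := -δ) (by linarith) n
      rw [hεδ]
      calc 1 - (n:ℝ)*δ = 1 + (n:ℝ)*(-δ) := by ring
      _ ≤ (1 + -δ)^n := h
      _ = (1 - δ)^n := by ring_nf
    calc l ≤ ((1-δ)^n)^((1:ℝ)/(n:ℝ)) :=
        Real.rpow_le_rpow (by linarith) hbern (by positivity)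
    _ = 1 - δ := by
        rw [← Real.rpow_natCast (1-δ) n, ← Real.rpow_mul (by linarith), mul_one_div,
          div_self (ne_of_gt hn0), Real.rpow_one]
  have hl1 : l < 1 := lt_of_le_of_lt hlle (by linarith)
  refine ⟨p, hpP, ?_, ?_⟩
  · rintro y ⟨x, hx, rfl⟩
    show l • (x - p) + p ∈ P
    have heq : l • (x - p) + p = l • x + (1-l) • p := by module
    rw [heq]
    exact hPcv hx hpP hl0 (by linarith) (by ring)
  · rintro y0 ⟨x, hx, rfl⟩
    show l • (x - p) + p ∈ (P ∩ lpts n k) + smallCube n k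
    set y : EuclideanSpace ℝ (Fin n) := l • (x - p) + p with hy
    set z : EuclideanSpace ℝ (Fin n) :=
      (WithLp.equiv 2 (Fin n → ℝ)).symm (fun i => (round ((k:ℝ) * y i) : ℝ)/(k:ℝ)) with hz
    have hzi : ∀ i, z i = (round ((k:ℝ) * y i) : ℝ)/(k:ℝ) := fun i => rfl
    have hzl : z ∈ lpts n k := by
      intro i
      exact ⟨round ((k:ℝ) * y i), by rw [hzi]; field_simp⟩
    have hyz : ∀ i, |y i - z i| ≤ 1/(2*(k:ℝ)) := by
      intro i
      rw [hzi, show y i - (round ((k:ℝ)*y i):ℝ)/(k:ℝ)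
          = ((k:ℝ)*y i - round ((k:ℝ)*y i))/(k:ℝ) by field_simp,
        abs_div, abs_of_pos hkpos]
      rw [show 1/(2*(k:ℝ)) = (1/2)/(k:ℝ) by ring]
      exact (div_le_div_iff_of_pos_right hkpos).2 (abs_sub_round _)
    have hwnorm : ‖z - y‖ ≤ r * δ := by
      have hcoord : ∀ i, ‖(z - y) i‖^2 ≤ (1/(2*(k:ℝ)))^2 := by
        intro i
        have h1 : ‖(z - y) i‖ = |y i - z i| := by
          rw [PiLp.sub_apply, Real.norm_eq_abs, abs_sub_comm]
        rw [h1]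
        have h2 := hyz i
        have h3 : (0:ℝ) ≤ |y i - z i| := abs_nonneg _
        nlinarith
      rw [EuclideanSpace.norm_eq]
      have h4 : ∑ i, ‖(z - y) i‖^2 ≤ (n:ℝ) * (1/(2*(k:ℝ)))^2 := by
        calc ∑ i, ‖(z - y) i‖^2 ≤ ∑ _i : Fin n, (1/(2*(k:ℝ)))^2 :=
            Finset.sum_le_sum (fun i _ => hcoord i)
        _ = (n:ℝ) * (1/(2*(k:ℝ)))^2 := by
            rw [Finset.sum_const, Finset.card_univ, Fintype.card_fin, nsmul_eq_mul]
      calc Real.sqrt (∑ i, ‖(z - y) i‖^2) ≤ Real.sqrt ((n:ℝ) * (1/(2*(k:ℝ)))^2) :=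
          Real.sqrt_le_sqrt h4
      _ = Real.sqrt n * (1/(2*(k:ℝ))) := by
          rw [Real.sqrt_mul (le_of_lt hn0), Real.sqrt_sq (by positivity)]
      _ = r * δ := by
          rw [hδdef]
          field_simp
    have h1l : (0:ℝ) < 1 - l := by linarith
    have hzP : z ∈ P := by
      have hmem : p + (1-l)⁻¹ • (z - y) ∈ P := by
        apply hpball
        rw [Metric.mem_closedBall, dist_eq_norm, add_sub_cancel_left, norm_smul,
          Real.norm_eq_abs, abs_of_pos (by positivity)]
        have h5 : (1-l)⁻¹ * ‖z - y‖ ≤ (1-l)⁻¹ * (r * δ) :=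
          mul_le_mul_of_nonneg_left hwnorm (by positivity)
        have h6 : (1-l)⁻¹ * (r * δ) ≤ r := by
          rw [inv_mul_le_iff₀ h1l]
          have : δ ≤ 1 - l := by linarith
          nlinarith [hrpos]
        linarith
      have h2 : z = l • x + (1-l) • (p + (1-l)⁻¹ • (z - y)) := by
        rw [smul_add, smul_smul, mul_inv_cancel₀ (ne_of_gt h1l), one_smul]
        have h3 : l • x + (1-l) • p = y := by rw [hy]; module
        rw [← add_assoc, h3]
        abel
      rw [h2]
      exact hPcv hx hmem hl0 (le_of_lt h1l) (by ring)
    have hsc : y - z ∈ smallCube n k := by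
      intro i
      rw [PiLp.sub_apply]
      exact hyz i
    exact Set.mem_add.2 ⟨z, ⟨hzP, hzl⟩, y - z, hsc, by abel⟩
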